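/- Let s ≥ 1 and let V be a finite set with |V| = 2s. Fix a perfect matching M₀ of V. Then for every integer k with 0 ≤ k ≤ s, the number of perfect matchings M of V sharing at least k pairs with M₀ satisfies k! · #{M : |M ∩ M₀| ≥ k} ≤ (2s)!/(2^s · s!). Equivalently, if M is drawn uniformly at random among all perfect matchings of V, then P[|M ∩ M₀| ≥ k] ≤ 1/k!. -/

import Mathlib

/-- A perfect matching of a finite set `V`, encoded as a fixed-point-free involution:
the pairs of the matching are the orbits `{x, f x}`. -/
def IsPerfectMatching {V : Type*} (f : Equiv.Perm V) : Prop :=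
  (∀ x, f (f x) = x) ∧ ∀ x, f x ≠ x

instance {V : Type*} [Fintype V] [DecidableEq V] (f : Equiv.Perm V) :
    Decidable (IsPerfectMatching f) := by
  unfold IsPerfectMatching; infer_instance

open Finset Equiv

universe u

/-- Double factorial: `DF m = (2m-1)!! = 1 * 3 * ... * (2m-1)`. -/
def DF : ℕ → ℕ
  | 0 => 1
  | m + 1 => (2 * m + 1) * DF m

lemma DF_factorial (s : ℕ) : 2 ^ s * Nat.factorial s * DF s = Nat.factorial (2 * s) := by
  induction s with
  | zero => rfl
  | succ m ih =>
      have h1 : (2 * (m + 1)).factorial = (2 * m + 2) * ((2 * m + 1) * (2 * m).factorial) := by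
        have h2 : 2 * (m + 1) = 2 * m + 1 + 1 := by ring
        rw [h2, Nat.factorial_succ, Nat.factorial_succ]
      rw [h1, ← ih, DF, Nat.factorial_succ, pow_succ]
      ring

section Ext

variable {V : Type u} [Fintype V] [DecidableEq V]

set_option linter.unusedSectionVars false in
lemma mem_iff_apply_mem (g : Perm V) (S : Finset V) (hmem : ∀ x ∈ S, g x ∈ S) :
    ∀ x, x ∈ S ↔ g x ∈ S := by
  have himg : S.image g = S :=
    Finset.eq_of_subset_of_card_le
      (fun y hy => by
        obtain ⟨x, hx, rfl⟩ := Finset.mem_image.1 hy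
        exact hmem x hx)
      (le_of_eq (Finset.card_image_of_injective S g.injective).symm)
  intro x
  constructor
  · exact hmem x
  · intro hx
    rw [← himg] at hx
    obtain ⟨y, hy, hyx⟩ := Finset.mem_image.1 hx
    rwa [← g.injective hyx]

/-- Matchings of `V` prescribed to agree with `g` on a `g`-closed set `S` are counted
by matchings of the complement of `S`. -/
lemma card_ext (g : Perm V) (S : Finset V)
    (hmem : ∀ x ∈ S, g x ∈ S) (hinv : ∀ x ∈ S, g (g x) = x) (hfix : ∀ x ∈ S, g x ≠ x) :
    (Finset.univ.filter (fun f : Perm V => IsPerfectMatching f ∧ ∀ x ∈ S, f x = g x)).card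
      = (Finset.univ.filter
          (fun h : Perm {x : V // ¬ x ∈ S} => IsPerfectMatching h)).card := by
  classical
  have key : ∀ x, x ∈ S ↔ g x ∈ S := mem_iff_apply_mem g S hmem
  have hnc : ∀ (f : Perm V), (∀ x, f (f x) = x) → (∀ x ∈ S, f x = g x) →
      ∀ x, ¬ x ∈ S ↔ ¬ f x ∈ S := by
    intro f hf hfs x
    constructor
    · intro hx hfx
      exact hx (by rw [← hf x, hfs (f x) hfx]; exact hmem _ hfx)
    · intro hfx hx
      exact hfx (by rw [hfs x hx]; exact hmem _ hx)
  rw [← Fintype.card_subtype, ← Fintype.card_subtype]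
  apply Fintype.card_congr
  have gS : Perm {x : V // x ∈ S} := g.subtypePerm (fun x => (key x).symm)
  refine
    { toFun := fun f => ⟨Equiv.Perm.subtypePerm f.1 (fun x => (hnc f.1 f.2.1.1 f.2.2 x).symm), ?_, ?_⟩
      invFun := fun h => ⟨Equiv.Perm.subtypeCongr (g.subtypePerm (fun x => (key x).symm)) h.1, ⟨?_, ?_⟩, ?_⟩
      left_inv := ?_
      right_inv := ?_ }
  · -- involution of restricted perm
    rintro ⟨x, hx⟩
    ext
    exact f.2.1.1 x
  · -- fpf of restricted perm
    rintro ⟨x, hx⟩ hcon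
    exact f.2.1.2 x (congrArg Subtype.val hcon)
  · -- involution of extended perm
    intro x
    by_cases hx : x ∈ S
    · rw [Equiv.Perm.subtypeCongr.left_apply _ _ hx]
      rw [Equiv.Perm.subtypeCongr.left_apply]
      · simp only [Equiv.Perm.subtypePerm_apply]
        exact hinv x hx
      · exact hmem x hx
    · rw [Equiv.Perm.subtypeCongr.right_apply _ _ hx]
      rw [Equiv.Perm.subtypeCongr.right_apply _ _ ((h.1 ⟨x, hx⟩).2)]
      exact congrArg Subtype.val (h.2.1 ⟨x, hx⟩)
  · -- fpf of extended perm
    intro x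
    by_cases hx : x ∈ S
    · rw [Equiv.Perm.subtypeCongr.left_apply _ _ hx]
      exact hfix x hx
    · rw [Equiv.Perm.subtypeCongr.right_apply _ _ hx]
      intro hcon
      exact h.2.2 ⟨x, hx⟩ (Subtype.ext hcon)
  · -- agrees with g on S
    intro x hx
    rw [Equiv.Perm.subtypeCongr.left_apply _ _ hx]
    rfl
  · -- left inverse
    rintro ⟨f, hf, hfs⟩
    ext x
    simp only
    by_cases hx : x ∈ S
    · rw [Equiv.Perm.subtypeCongr.left_apply _ _ hx]
      exact (hfs x hx).symm
    · rw [Equiv.Perm.subtypeCongr.right_apply _ _ hx]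
      rfl
  · -- right inverse
    rintro ⟨h, hh⟩
    ext x
    dsimp only
    simp only [Equiv.Perm.subtypePerm_apply]
    exact Equiv.Perm.subtypeCongr.right_apply _ _ x.2

end Ext

lemma card_matchings (m : ℕ) : ∀ (V : Type u) [Fintype V] [DecidableEq V],
    Fintype.card V = 2 * m →
    (Finset.univ.filter (fun f : Perm V => IsPerfectMatching f)).card = DF m := by
  induction m with
  | zero =>
    intro V _ _ hV
    have hE : IsEmpty V := Fintype.card_eq_zero_iff.mp (by simpa using hV)
    have h1 : (Finset.univ.filter (fun f : Perm V => IsPerfectMatching f)) = Finset.univ := by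
      apply Finset.filter_true_of_mem
      intro f _
      exact ⟨fun x => (hE.false x).elim, fun x => (hE.false x).elim⟩
    rw [h1, Finset.card_univ, Fintype.card_perm, hV]
    rfl
  | succ m ih =>
    intro V _ _ hV
    have hpos : 0 < Fintype.card V := by omega
    obtain ⟨v₀⟩ : Nonempty V := Fintype.card_pos_iff.mp hpos
    rw [Finset.card_eq_sum_card_fiberwise
      (f := fun f : Perm V => f v₀) (t := Finset.univ.filter (fun y => y ≠ v₀))
      (fun f hf => by
        simp only [Finset.mem_coe, Finset.mem_filter, Finset.mem_univ, true_and] at hf ⊢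
        exact hf.2 v₀)]
    have hfib : ∀ y ∈ Finset.univ.filter (fun y => y ≠ v₀),
        ((Finset.univ.filter fun f : Perm V => IsPerfectMatching f).filter
          (fun f => f v₀ = y)).card = DF m := by
      intro y hy
      have hyne : y ≠ v₀ := (Finset.mem_filter.mp hy).2
      have hset : (Finset.univ.filter fun f : Perm V => IsPerfectMatching f).filter
            (fun f => f v₀ = y)
          = Finset.univ.filter (fun f : Perm V => IsPerfectMatching f ∧
              ∀ x ∈ ({v₀, y} : Finset V), f x = Equiv.swap v₀ y x) := by
        ext f
        simp only [Finset.filter_filter, Finset.mem_filter, Finset.mem_univ, true_and,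
          Finset.mem_insert, Finset.mem_singleton]
        constructor
        · rintro ⟨hf, hfv⟩
          refine ⟨hf, ?_⟩
          rintro x (rfl | rfl)
          · rw [Equiv.swap_apply_left]; exact hfv
          · rw [Equiv.swap_apply_right, ← hfv, hf.1]
        · rintro ⟨hf, hxs⟩
          exact ⟨hf, by rw [hxs v₀ (Or.inl rfl), Equiv.swap_apply_left]⟩
      have hmem : ∀ x ∈ ({v₀, y} : Finset V), Equiv.swap v₀ y x ∈ ({v₀, y} : Finset V) := by
        rintro x hx
        simp only [Finset.mem_insert, Finset.mem_singleton] at hx ⊢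
        rcases hx with rfl | rfl
        · rw [Equiv.swap_apply_left]; exact Or.inr rfl
        · rw [Equiv.swap_apply_right]; exact Or.inl rfl
      rw [hset, card_ext (Equiv.swap v₀ y) {v₀, y} hmem
        (fun x _ => Equiv.swap_apply_self v₀ y x)
        (by
          rintro x hx
          simp only [Finset.mem_insert, Finset.mem_singleton] at hx
          rcases hx with rfl | rfl
          · rw [Equiv.swap_apply_left]; exact hyne
          · rw [Equiv.swap_apply_right]; exact fun h => hyne h.symm)]
      apply ih
      rw [Fintype.card_subtype_compl, Fintype.card_coe, hV,
        Finset.card_insert_of_notMem (by simpa using hyne.symm), Finset.card_singleton]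
      omega
    rw [Finset.sum_congr rfl hfib, Finset.sum_const, smul_eq_mul]
    have hc : (Finset.univ.filter (fun y => y ≠ v₀)).card = 2 * m + 1 := by
      rw [Finset.filter_ne', Finset.card_erase_of_mem (Finset.mem_univ v₀),
        Finset.card_univ, hV]
      omega
    rw [hc]
    rfl

section Tuples

variable {V : Type u} [Fintype V] [DecidableEq V] (f₀ : Perm V) (hf₀ : IsPerfectMatching f₀)

/-- Tuples of `j` points of `A` lying in pairwise distinct `f₀`-pairs. -/
def Gset (j : ℕ) (A : Finset V) : Finset (Fin j → V) :=
  Finset.univ.filter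
    (fun t => (∀ i, t i ∈ A) ∧ ∀ i i', i ≠ i' → t i ≠ t i' ∧ t i ≠ f₀ (t i'))

lemma card_Gset (hf₀ : IsPerfectMatching f₀) (j : ℕ) (A : Finset V) (hA : ∀ x ∈ A, f₀ x ∈ A) :
    (Gset f₀ j A).card = ∏ i ∈ Finset.range j, (A.card - 2 * i) := by
  induction j with
  | zero =>
    rw [Finset.range_zero, Finset.prod_empty]
    have h0 : Gset f₀ 0 A = Finset.univ := by
      apply Finset.filter_true_of_mem
      intro t _
      exact ⟨fun i => i.elim0, fun i => i.elim0⟩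
    rw [h0, Finset.card_univ]
    simp
  | succ j ihj =>
    rw [Finset.prod_range_succ, ← ihj]
    have hrestrict : ∀ t ∈ Gset f₀ (j + 1) A, Fin.init t ∈ Gset f₀ j A := by
      intro t ht
      simp only [Gset, Finset.mem_filter, Finset.mem_univ, true_and] at ht ⊢
      refine ⟨fun i => ht.1 _, fun i i' hne => ht.2 _ _ ?_⟩
      exact fun h => hne (Fin.castSucc_injective _ h)
    rw [Finset.card_eq_sum_card_fiberwise hrestrict]
    have hfibcard : ∀ t ∈ Gset f₀ j A,
        ((Gset f₀ (j + 1) A).filter (fun t' => Fin.init t' = t)).card = A.card - 2 * j := by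
      intro t ht
      simp only [Gset, Finset.mem_filter, Finset.mem_univ, true_and] at ht
      obtain ⟨htA, htp⟩ := ht
      set B : Finset V :=
        (Finset.univ.image t) ∪ (Finset.univ.image (fun i => f₀ (t i))) with hB
      have htinj : Function.Injective t := by
        intro i i' h
        by_contra hne
        exact (htp i i' hne).1 h
      have him2 : Function.Injective (fun i => f₀ (t i)) :=
        fun i i' h => htinj (f₀.injective h)
      have hBA : B ⊆ A := by
        intro x hx
        rw [hB, Finset.mem_union] at hx
        rcases hx with hx | hx <;> obtain ⟨i, _, rfl⟩ := Finset.mem_image.1 hx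
        · exact htA i
        · exact hA _ (htA i)
      have hdisj : Disjoint (Finset.univ.image t)
          (Finset.univ.image (fun i => f₀ (t i))) := by
        rw [Finset.disjoint_left]
        intro x hx hx'
        obtain ⟨i, _, rfl⟩ := Finset.mem_image.1 hx
        obtain ⟨i', _, h'⟩ := Finset.mem_image.1 hx'
        by_cases hii : i = i'
        · subst hii
          exact hf₀.2 (t i) h'
        · exact (htp i i' hii).2 h'.symm
      have hBcard : B.card = 2 * j := by
        rw [hB, Finset.card_union_of_disjoint hdisj,
          Finset.card_image_of_injective _ htinj,
          Finset.card_image_of_injective _ him2, Finset.card_univ, Fintype.card_fin]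
        ring
      have hkey : ((Gset f₀ (j + 1) A).filter (fun t' => Fin.init t' = t)).card
          = (A \ B).card := by
        apply Finset.card_nbij' (fun t' => t' (Fin.last j)) (fun x => Fin.snoc t x)
        · intro t' ht'
          simp only [Finset.mem_coe, Gset, Finset.filter_filter, Finset.mem_filter, Finset.mem_univ,
            true_and] at ht'
          obtain ⟨⟨hA', hp'⟩, hinit⟩ := ht'
          rw [Finset.mem_coe, Finset.mem_sdiff]
          refine ⟨hA' _, ?_⟩
          rw [hB, Finset.mem_union]
          rintro (hx | hx) <;> obtain ⟨i, _, hi⟩ := Finset.mem_image.1 hx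
          · have h1 : t' i.castSucc = t' (Fin.last j) := by
              rw [← hinit] at hi; exact hi
            exact (hp' i.castSucc (Fin.last j) (Fin.castSucc_lt_last i).ne).1 h1
          · have hti : t i = t' i.castSucc := by rw [← hinit]; rfl
            refine (hp' (Fin.last j) i.castSucc (Fin.castSucc_lt_last i).ne').2 ?_
            rw [← hti]; exact hi.symm
        · intro x hx
          rw [Finset.mem_coe, Finset.mem_sdiff] at hx
          obtain ⟨hxA, hxB⟩ := hx
          simp only [Finset.mem_coe, Gset, Finset.filter_filter, Finset.mem_filter, Finset.mem_univ, true_and]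
          have hnotim : ∀ i, x ≠ t i := by
            intro i h
            apply hxB
            rw [hB, Finset.mem_union]
            exact Or.inl (Finset.mem_image.2 ⟨i, Finset.mem_univ i, h.symm⟩)
          have hnotim' : ∀ i, x ≠ f₀ (t i) := by
            intro i h
            apply hxB
            rw [hB, Finset.mem_union]
            exact Or.inr (Finset.mem_image.2 ⟨i, Finset.mem_univ i, h.symm⟩)
          refine ⟨⟨?_, ?_⟩, by simp⟩
          · intro i
            refine Fin.lastCases ?_ (fun i' => ?_) i
            · rw [Fin.snoc_last]; exact hxA
            · rw [Fin.snoc_castSucc]; exact htA i'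
          · intro i i' hne
            induction i using Fin.lastCases with
            | last =>
              induction i' using Fin.lastCases with
              | last => exact absurd rfl hne
              | cast b =>
                rw [Fin.snoc_last, Fin.snoc_castSucc]
                exact ⟨hnotim b, hnotim' b⟩
            | cast a =>
              induction i' using Fin.lastCases with
              | last =>
                rw [Fin.snoc_castSucc, Fin.snoc_last]
                exact ⟨fun h => hnotim a h.symm, fun h => hnotim' a (by rw [h, hf₀.1])⟩
              | cast b =>
                rw [Fin.snoc_castSucc, Fin.snoc_castSucc]
                exact htp a b (fun h => hne (by rw [h]))
        · intro t' ht'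
          simp only [Finset.mem_coe, Finset.mem_filter] at ht'
          rw [← ht'.2]; exact Fin.snoc_init_self t'
        · intro x _
          simp
      rw [hkey, Finset.card_sdiff_of_subset hBA, hBcard]
    rw [Finset.sum_congr rfl hfibcard, Finset.sum_const, smul_eq_mul, Nat.mul_comm]

end Tuples

lemma prod_two_mul_sub (n : ℕ) :
    ∏ i ∈ Finset.range n, (2 * n - 2 * i) = 2 ^ n * n.factorial := by
  have h1 : ∏ i ∈ Finset.range n, (2 * n - 2 * i)
      = ∏ i ∈ Finset.range n, (2 * (n - 1 - i + 1)) := by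
    apply Finset.prod_congr rfl
    intro i hi
    have := Finset.mem_range.1 hi
    omega
  rw [h1, Finset.prod_range_reflect (fun i => 2 * (i + 1)) n,
    Finset.prod_mul_distrib, Finset.prod_const, Finset.card_range,
    Finset.prod_range_add_one_eq_factorial]

lemma prod_two_mul_sub' (s k : ℕ) :
    ∏ i ∈ Finset.range k, (2 * s - 2 * i) = 2 ^ k * s.descFactorial k := by
  rw [Nat.descFactorial_eq_prod_range]
  have h1 : ∏ i ∈ Finset.range k, (2 * s - 2 * i)
      = ∏ i ∈ Finset.range k, (2 * (s - i)) := by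
    apply Finset.prod_congr rfl
    intro i _
    omega
  rw [h1, Finset.prod_mul_distrib, Finset.prod_const, Finset.card_range]

lemma descFactorial_DF_le (s : ℕ) : ∀ k ≤ s, s.descFactorial k * DF (s - k) ≤ DF s := by
  intro k
  induction k with
  | zero => intro _; simp
  | succ k ih =>
    intro hks
    have hk : k ≤ s := by omega
    have h2 : DF (s - k) = (2 * (s - (k + 1)) + 1) * DF (s - (k + 1)) := by
      have h1 : s - k = (s - (k + 1)) + 1 := by omega
      rw [h1, DF]
    calc s.descFactorial (k + 1) * DF (s - (k + 1))
        = s.descFactorial k * ((s - k) * DF (s - (k + 1))) := by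
          rw [Nat.descFactorial_succ]; ring
      _ ≤ s.descFactorial k * DF (s - k) := by
          apply Nat.mul_le_mul_left
          rw [h2]
          exact Nat.mul_le_mul_right _ (by omega)
      _ ≤ DF s := ih hk

theorem stmt18 (s : ℕ) (hs : 1 ≤ s) (V : Type*) [Fintype V] [DecidableEq V]
    (hV : Fintype.card V = 2 * s)
    (f₀ : Equiv.Perm V) (hf₀ : IsPerfectMatching f₀)
    (k : ℕ) (hk : k ≤ s) :
    (Nat.factorial k : ℝ) *
        ((Finset.univ.filter (fun f : Equiv.Perm V =>
            IsPerfectMatching f ∧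
              2 * k ≤ (Finset.univ.filter (fun x : V => f x = f₀ x)).card)).card : ℝ)
      ≤ (Nat.factorial (2 * s) : ℝ) / (2 ^ s * Nat.factorial s) := by
  classical
  set N := Finset.univ.filter (fun f : Perm V => IsPerfectMatching f) with hN
  set Ak := Finset.univ.filter (fun f : Perm V =>
    IsPerfectMatching f ∧
      2 * k ≤ (Finset.univ.filter (fun x : V => f x = f₀ x)).card) with hAk
  have hAcl : ∀ f : Perm V, IsPerfectMatching f →
      ∀ x ∈ Finset.univ.filter (fun x : V => f x = f₀ x),
        f₀ x ∈ Finset.univ.filter (fun x : V => f x = f₀ x) := by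
    intro f hf x hx
    simp only [Finset.mem_filter, Finset.mem_univ, true_and] at hx ⊢
    rw [hf₀.1, ← hx, hf.1]
  have hGA : ∀ f : Perm V, IsPerfectMatching f →
      Gset f₀ k (Finset.univ.filter (fun x => f x = f₀ x))
        = (Gset f₀ k Finset.univ).filter (fun t => ∀ i, f (t i) = f₀ (t i)) := by
    intro f hf
    ext t
    simp only [Gset, Finset.filter_filter, Finset.mem_filter, Finset.mem_univ, true_and]
    tauto
  have hlow : ∀ f ∈ Ak,
      2 ^ k * Nat.factorial k
        ≤ (Gset f₀ k (Finset.univ.filter (fun x => f x = f₀ x))).card := by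
    intro f hf
    rw [hAk, Finset.mem_filter] at hf
    obtain ⟨_, hf1, hf2⟩ := hf
    rw [card_Gset f₀ hf₀ k _ (hAcl f hf1), ← prod_two_mul_sub k]
    apply Finset.prod_le_prod'
    intro i hi
    have := Finset.mem_range.1 hi
    omega
  have hAkN : Ak ⊆ N := by
    intro f hf
    rw [hAk, Finset.mem_filter] at hf
    rw [hN, Finset.mem_filter]
    exact ⟨hf.1, hf.2.1⟩
  have hsum : ∑ f ∈ N, (Gset f₀ k (Finset.univ.filter (fun x => f x = f₀ x))).card
      = ∑ t ∈ Gset f₀ k Finset.univ,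
          (N.filter (fun f => ∀ i, f (t i) = f₀ (t i))).card := by
    have h1 : ∀ f ∈ N, (Gset f₀ k (Finset.univ.filter (fun x => f x = f₀ x))).card
        = ∑ t ∈ Gset f₀ k Finset.univ,
            if (∀ i, f (t i) = f₀ (t i)) then 1 else 0 := by
      intro f hfN
      rw [hN, Finset.mem_filter] at hfN
      rw [hGA f hfN.2, Finset.card_filter]
    rw [Finset.sum_congr rfl h1, Finset.sum_comm]
    apply Finset.sum_congr rfl
    intro t _
    rw [Finset.card_filter]
  have ht_count : ∀ t ∈ Gset f₀ k Finset.univ,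
      (N.filter (fun f => ∀ i, f (t i) = f₀ (t i))).card = DF (s - k) := by
    intro t ht
    simp only [Gset, Finset.mem_filter, Finset.mem_univ, true_and, forall_const] at ht
    have htp := ht.2
    set S : Finset V :=
      (Finset.univ.image t) ∪ (Finset.univ.image (fun i => f₀ (t i))) with hS
    have hmemS : ∀ x ∈ S, f₀ x ∈ S := by
      intro x hx
      rw [hS, Finset.mem_union] at hx ⊢
      rcases hx with hx | hx <;> obtain ⟨i, _, rfl⟩ := Finset.mem_image.1 hx
      · exact Or.inr (Finset.mem_image.2 ⟨i, Finset.mem_univ i, rfl⟩)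
      · exact Or.inl (Finset.mem_image.2 ⟨i, Finset.mem_univ i, (hf₀.1 _).symm⟩)
    have htinj : Function.Injective t := by
      intro i i' h
      by_contra hne
      exact (htp i i' hne).1 h
    have him2 : Function.Injective (fun i => f₀ (t i)) :=
      fun i i' h => htinj (f₀.injective h)
    have hdisj : Disjoint (Finset.univ.image t)
        (Finset.univ.image (fun i => f₀ (t i))) := by
      rw [Finset.disjoint_left]
      intro x hx hx'
      obtain ⟨i, _, rfl⟩ := Finset.mem_image.1 hx
      obtain ⟨i', _, h'⟩ := Finset.mem_image.1 hx'
      by_cases hii : i = i'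
      · subst hii
        exact hf₀.2 (t i) h'
      · exact (htp i i' hii).2 h'.symm
    have hScard : S.card = 2 * k := by
      rw [hS, Finset.card_union_of_disjoint hdisj,
        Finset.card_image_of_injective _ htinj,
        Finset.card_image_of_injective _ him2, Finset.card_univ, Fintype.card_fin]
      ring
    have hcard : Fintype.card {x : V // ¬ x ∈ S} = 2 * (s - k) := by
      rw [Fintype.card_subtype_compl, Fintype.card_coe, hV, hScard, Nat.mul_sub]
    have hfilter_eq : N.filter (fun f => ∀ i, f (t i) = f₀ (t i))
        = Finset.univ.filter
            (fun f : Perm V => IsPerfectMatching f ∧ ∀ x ∈ S, f x = f₀ x) := by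
      ext f
      rw [hN]
      simp only [Finset.filter_filter, Finset.mem_filter, Finset.mem_univ, true_and]
      constructor
      · rintro ⟨hf, hag⟩
        refine ⟨hf, ?_⟩
        intro x hx
        rw [hS, Finset.mem_union] at hx
        rcases hx with hx | hx <;> obtain ⟨i, _, rfl⟩ := Finset.mem_image.1 hx
        · exact hag i
        · rw [← hag i, hf.1, hag i, hf₀.1]
      · rintro ⟨hf, hag⟩
        have hmem : ∀ i, t i ∈ S := by
          intro i
          rw [hS, Finset.mem_union]
          exact Or.inl (Finset.mem_image.2 ⟨i, Finset.mem_univ i, rfl⟩)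
        exact ⟨hf, fun i => hag (t i) (hmem i)⟩
    rw [hfilter_eq, card_ext f₀ S hmemS (fun x _ => hf₀.1 x) (fun x _ => hf₀.2 x)]
    exact card_matchings (s - k) _ hcard
  have hT : (Gset f₀ k (Finset.univ : Finset V)).card = 2 ^ k * s.descFactorial k := by
    rw [card_Gset f₀ hf₀ k Finset.univ (fun x _ => Finset.mem_univ _),
      Finset.card_univ, hV, prod_two_mul_sub' s k]
  have hmain : 2 ^ k * (Nat.factorial k * Ak.card)
      ≤ 2 ^ k * (s.descFactorial k * DF (s - k)) := by
    calc 2 ^ k * (Nat.factorial k * Ak.card)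
        = Ak.card • (2 ^ k * Nat.factorial k) := by rw [smul_eq_mul]; ring
      _ ≤ ∑ f ∈ Ak, (Gset f₀ k (Finset.univ.filter (fun x => f x = f₀ x))).card :=
          Finset.card_nsmul_le_sum Ak _ _ hlow
      _ ≤ ∑ f ∈ N, (Gset f₀ k (Finset.univ.filter (fun x => f x = f₀ x))).card :=
          Finset.sum_le_sum_of_subset hAkN
      _ = ∑ t ∈ Gset f₀ k Finset.univ,
            (N.filter (fun f => ∀ i, f (t i) = f₀ (t i))).card := hsum
      _ = (Gset f₀ k (Finset.univ : Finset V)).card * DF (s - k) := by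
          rw [Finset.sum_congr rfl ht_count, Finset.sum_const, smul_eq_mul]
      _ = 2 ^ k * (s.descFactorial k * DF (s - k)) := by rw [hT]; ring
  have hnat : Nat.factorial k * Ak.card ≤ DF s :=
    le_trans (Nat.le_of_mul_le_mul_left hmain (pow_pos two_pos k))
      (descFactorial_DF_le s k hk)
  have hDF : (DF s : ℝ) = (Nat.factorial (2 * s) : ℝ) / (2 ^ s * Nat.factorial s) := by
    rw [eq_div_iff (by positivity)]
    exact_mod_cast congrArg (fun n : ℕ => (n : ℝ))
      (by rw [← DF_factorial s]; ring : (DF s * (2 ^ s * Nat.factorial s)) = Nat.factorial (2 * s))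
  calc (Nat.factorial k : ℝ) * (Ak.card : ℝ)
      = ((Nat.factorial k * Ak.card : ℕ) : ℝ) := by push_cast; ring
    _ ≤ (DF s : ℝ) := by exact_mod_cast hnat
    _ = (Nat.factorial (2 * s) : ℝ) / (2 ^ s * Nat.factorial s) := hDF
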